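/- Let f₀, f₁, f₂, λ₁, λ₂ be as in the Minkowski-combination setting (hypograph of f₀ = λ₁·hypograph(f₁) + λ₂·hypograph(f₂), f_i concave, λ₁+λ₂=1, λ_i>0). Suppose (p, f₀(p)) = λ₁·(q, f₁(q)) + λ₂·(r, f₂(r)) with all points on the respective graphs. Then for every p' < p in the domain of f₀ there exist q' ≤ q and r' ≤ r in the domains of f₁, f₂ with (p', f₀(p')) = λ₁·(q', f₁(q')) + λ₂·(r', f₂(r')). -/

import Mathlib

open Set Filter Topology Pointwise

/-- Hypograph of a function on a domain. -/
def hypo (f : ℝ → ℝ) (s : Set ℝ) : Set (ℝ × ℝ) := {p | p.1 ∈ s ∧ p.2 ≤ f p.1}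

lemma concave_exchange {f : ℝ → ℝ} {s : Set ℝ} (hf : ConcaveOn ℝ s f)
    {x₁ x₂ x₃ x₄ : ℝ} (h1 : x₁ ∈ s) (h4 : x₄ ∈ s) (h12 : x₁ ≤ x₂) (h13 : x₁ ≤ x₃)
    (h34 : x₃ ≤ x₄) (hsum : x₂ + x₃ = x₁ + x₄) : f x₁ + f x₄ ≤ f x₂ + f x₃ := by
  rcases eq_or_lt_of_le (le_trans h12 (by linarith : x₂ ≤ x₄)) with he | hlt
  · have e2 : x₂ = x₁ := by linarith
    have e3 : x₃ = x₁ := by linarith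
    rw [e2, e3, ← he]
  · set t : ℝ := (x₂ - x₁) / (x₄ - x₁) with ht
    have hd : (0:ℝ) < x₄ - x₁ := by linarith
    have ht0 : 0 ≤ t := div_nonneg (by linarith) hd.le
    have ht1 : t ≤ 1 := by
      rw [div_le_one hd]; linarith
    have key : t * (x₄ - x₁) = x₂ - x₁ := by rw [ht]; exact div_mul_cancel₀ _ hd.ne'
    have hx₂ : x₂ = (1 - t) * x₁ + t * x₄ := by linear_combination -key
    have hx₃ : x₃ = t * x₁ + (1 - t) * x₄ := by
      linear_combination key + hsum
    have i2 := hf.2 h1 h4 (by linarith : (0:ℝ) ≤ 1 - t) ht0 (by ring)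
    have i3 := hf.2 h1 h4 ht0 (by linarith : (0:ℝ) ≤ 1 - t) (by ring)
    simp only [smul_eq_mul] at i2 i3
    rw [← hx₂] at i2
    rw [← hx₃] at i3
    linarith

/-- In the Minkowski-combination setting, every point `(p', f₀ p')` with `p' < p`
decomposes into points `(q', f₁ q')` and `(r', f₂ r')` with `q' ≤ q` and `r' ≤ r`. -/
theorem stmt_16 (f₀ f₁ f₂ : ℝ → ℝ) (s₀ s₁ s₂ : Set ℝ)
    (hs₀ : s₀.OrdConnected) (hs₁ : s₁.OrdConnected) (hs₂ : s₂.OrdConnected)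
    (h0 : ConcaveOn ℝ s₀ f₀) (h1 : ConcaveOn ℝ s₁ f₁) (h2 : ConcaveOn ℝ s₂ f₂)
    (lam₁ lam₂ : ℝ) (hl1 : 0 < lam₁) (hl2 : 0 < lam₂) (hsum : lam₁ + lam₂ = 1)
    (hhyp : hypo f₀ s₀ = lam₁ • hypo f₁ s₁ + lam₂ • hypo f₂ s₂)
    (p q r : ℝ) (hp : p ∈ s₀) (hq : q ∈ s₁) (hr : r ∈ s₂)
    (hdec : ((p, f₀ p) : ℝ × ℝ) = lam₁ • ((q, f₁ q) : ℝ × ℝ) + lam₂ • ((r, f₂ r) : ℝ × ℝ)) :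
    ∀ p' ∈ s₀, p' < p → ∃ q' ∈ s₁, ∃ r' ∈ s₂, q' ≤ q ∧ r' ≤ r ∧
      p' = lam₁ * q' + lam₂ * r' ∧ f₀ p' = lam₁ * f₁ q' + lam₂ * f₂ r' := by
  -- forward: combinations land in the hypograph of f₀
  have fwd : ∀ x ∈ s₁, ∀ y ∈ s₂, lam₁ * x + lam₂ * y ∈ s₀ ∧
      lam₁ * f₁ x + lam₂ * f₂ y ≤ f₀ (lam₁ * x + lam₂ * y) := by
    intro x hx y hy
    have hmem' : lam₁ • ((x, f₁ x) : ℝ × ℝ) + lam₂ • ((y, f₂ y) : ℝ × ℝ) ∈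
        lam₁ • hypo f₁ s₁ + lam₂ • hypo f₂ s₂ :=
      Set.add_mem_add (Set.smul_mem_smul_set ⟨hx, le_refl _⟩)
        (Set.smul_mem_smul_set ⟨hy, le_refl _⟩)
    rw [← hhyp] at hmem'
    have hpt : lam₁ • ((x, f₁ x) : ℝ × ℝ) + lam₂ • ((y, f₂ y) : ℝ × ℝ)
        = (lam₁ * x + lam₂ * y, lam₁ * f₁ x + lam₂ * f₂ y) := by
      simp [Prod.ext_iff]
    rw [hpt] at hmem'
    exact ⟨hmem'.1, hmem'.2⟩
  -- backward: every point of the graph of f₀ decomposes exactly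
  have bwd : ∀ z ∈ s₀, ∃ a ∈ s₁, ∃ b ∈ s₂, z = lam₁ * a + lam₂ * b ∧
      f₀ z = lam₁ * f₁ a + lam₂ * f₂ b := by
    intro z hz
    have hmem : ((z, f₀ z) : ℝ × ℝ) ∈ hypo f₀ s₀ := ⟨hz, le_refl _⟩
    rw [hhyp] at hmem
    obtain ⟨u, hu, v, hv, huv⟩ := Set.mem_add.mp hmem
    obtain ⟨⟨a, ya⟩, ⟨ha, hya⟩, rfl⟩ := hu
    obtain ⟨⟨b, yb⟩, ⟨hb, hyb⟩, rfl⟩ := hv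
    simp only [Prod.smul_mk, Prod.mk_add_mk, Prod.ext_iff, smul_eq_mul] at huv
    obtain ⟨hz1, hz2⟩ := huv
    refine ⟨a, ha, b, hb, hz1.symm, ?_⟩
    have hle := (fwd a ha b hb).2
    rw [hz1] at hle
    have i1 : lam₁ * ya ≤ lam₁ * f₁ a := mul_le_mul_of_nonneg_left hya hl1.le
    have i2 : lam₂ * yb ≤ lam₂ * f₂ b := mul_le_mul_of_nonneg_left hyb hl2.le
    linarith
  have hp1 : p = lam₁ * q + lam₂ * r := by
    have := congrArg Prod.fst hdec; simpa using this
  have hp2 : f₀ p = lam₁ * f₁ q + lam₂ * f₂ r := by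
    have := congrArg Prod.snd hdec; simpa using this
  intro p' hp' hlt
  obtain ⟨a, ha, b, hb, ha1, ha2⟩ := bwd p' hp'
  rcases le_or_gt a q with haq | haq
  · rcases le_or_gt b r with hbr | hbr
    · exact ⟨a, ha, b, hb, haq, hbr, ha1, ha2⟩
    · -- b > r, hence a < q; slide to (q', r)
      set q' : ℝ := (p' - lam₂ * r) / lam₁ with hq'def
      set q'' : ℝ := (p - lam₂ * b) / lam₁ with hq''def
      have e1 : lam₁ * q' = p' - lam₂ * r := by rw [hq'def]; exact mul_div_cancel₀ _ hl1.ne'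
      have e2 : lam₁ * q'' = p - lam₂ * b := by rw [hq''def]; exact mul_div_cancel₀ _ hl1.ne'
      have haq' : a ≤ q' := by
        have : lam₁ * a < lam₁ * q' := by nlinarith
        exact ((mul_lt_mul_iff_right₀ hl1).mp this).le
      have hq'q : q' < q := by
        have : lam₁ * q' < lam₁ * q := by nlinarith
        exact (mul_lt_mul_iff_right₀ hl1).mp this
      have haq'' : a ≤ q'' := by
        have : lam₁ * a < lam₁ * q'' := by nlinarith
        exact ((mul_lt_mul_iff_right₀ hl1).mp this).le
      have hq''q : q'' ≤ q := by
        have : lam₁ * q'' < lam₁ * q := by nlinarith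
        exact ((mul_lt_mul_iff_right₀ hl1).mp this).le
      have hq's : q' ∈ s₁ := hs₁.out ha hq ⟨haq', hq'q.le⟩
      have hq''s : q'' ∈ s₁ := hs₁.out ha hq ⟨haq'', hq''q⟩
      have hsumq : q' + q'' = a + q := by
        have : lam₁ * (q' + q'') = lam₁ * (a + q) := by rw [mul_add, mul_add]; linarith
        exact mul_left_cancel₀ hl1.ne' this
      have hx : f₁ a + f₁ q ≤ f₁ q' + f₁ q'' := concave_exchange h1 ha hq haq' haq'' hq''q hsumq
      have hfwd1 := (fwd q'' hq''s b hb).2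
      have hpe : lam₁ * q'' + lam₂ * b = p := by linarith
      rw [hpe] at hfwd1
      have hfwd2 := (fwd q' hq's r hr).2
      have hpe' : lam₁ * q' + lam₂ * r = p' := by linarith
      rw [hpe'] at hfwd2
      have hxm : lam₁ * (f₁ a + f₁ q) ≤ lam₁ * (f₁ q' + f₁ q'') :=
        mul_le_mul_of_nonneg_left hx hl1.le
      rw [mul_add, mul_add] at hxm
      refine ⟨q', hq's, r, hr, hq'q.le, le_refl r, by linarith, le_antisymm (by linarith) hfwd2⟩
  · -- a > q, hence b < r; slide to (q, r')
    set r' : ℝ := (p' - lam₁ * q) / lam₂ with hr'def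
    set r'' : ℝ := (p - lam₁ * a) / lam₂ with hr''def
    have e1 : lam₂ * r' = p' - lam₁ * q := by rw [hr'def]; exact mul_div_cancel₀ _ hl2.ne'
    have e2 : lam₂ * r'' = p - lam₁ * a := by rw [hr''def]; exact mul_div_cancel₀ _ hl2.ne'
    have hbr' : b ≤ r' := by
      have : lam₂ * b < lam₂ * r' := by nlinarith
      exact ((mul_lt_mul_iff_right₀ hl2).mp this).le
    have hr'r : r' < r := by
      have : lam₂ * r' < lam₂ * r := by nlinarith
      exact (mul_lt_mul_iff_right₀ hl2).mp this
    have hbr'' : b ≤ r'' := by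
      have : lam₂ * b < lam₂ * r'' := by nlinarith
      exact ((mul_lt_mul_iff_right₀ hl2).mp this).le
    have hr''r : r'' ≤ r := by
      have : lam₂ * r'' < lam₂ * r := by nlinarith
      exact ((mul_lt_mul_iff_right₀ hl2).mp this).le
    have hr's : r' ∈ s₂ := hs₂.out hb hr ⟨hbr', hr'r.le⟩
    have hr''s : r'' ∈ s₂ := hs₂.out hb hr ⟨hbr'', hr''r⟩
    have hsumr : r' + r'' = b + r := by
      have : lam₂ * (r' + r'') = lam₂ * (b + r) := by rw [mul_add, mul_add]; linarith
      exact mul_left_cancel₀ hl2.ne' this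
    have hx : f₂ b + f₂ r ≤ f₂ r' + f₂ r'' := concave_exchange h2 hb hr hbr' hbr'' hr''r hsumr
    have hfwd1 := (fwd a ha r'' hr''s).2
    have hpe : lam₁ * a + lam₂ * r'' = p := by linarith
    rw [hpe] at hfwd1
    have hfwd2 := (fwd q hq r' hr's).2
    have hpe' : lam₁ * q + lam₂ * r' = p' := by linarith
    rw [hpe'] at hfwd2
    have hxm : lam₂ * (f₂ b + f₂ r) ≤ lam₂ * (f₂ r' + f₂ r'') :=
      mul_le_mul_of_nonneg_left hx hl2.le
    rw [mul_add, mul_add] at hxm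
    refine ⟨q, hq, r', hr's, le_refl q, hr'r.le, by linarith, le_antisymm (by linarith) hfwd2⟩
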